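/- Let V = V_1 ⊕ V_2 be k-vector spaces with dim V_i ≥ 2, K ⊆ V_1 ⊗ V_2 ⊆ ⋀²V a subspace, and W(V,K) the middle homology of K ⊗ S → V ⊗ S → S (Koszul differentials, S = Sym V). Then the Koszul sheaf W(V,K) on P(V_1) × P(V_2) vanishes if and only if the orthogonal complement K^⊥ ⊆ V_1^∨ ⊗ V_2^∨ contains no nonzero tensor of rank at most two. -/

import Mathlib

open scoped TensorProduct

variable (k : Type) [Field k]
variable (V₁ V₂ : Type) [AddCommGroup V₁] [Module k V₁] [AddCommGroup V₂] [Module k V₂]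

/-- The fiber of the first map of the Koszul sheaf complex at a point `([f₁],[f₂])` of
`ℙ(V₁) × ℙ(V₂)`: the Koszul contraction `V₁ ⊗ V₂ → V₁ × V₂`,
`x ⊗ y ↦ (f₂(y)·x, -f₁(x)·y)`. -/
noncomputable def koszulFiber (f₁ : Module.Dual k V₁) (f₂ : Module.Dual k V₂) :
    V₁ ⊗[k] V₂ →ₗ[k] V₁ × V₂ :=
  LinearMap.prod
    ((TensorProduct.rid k V₁).toLinearMap.comp (LinearMap.lTensor V₁ f₂))
    (-((TensorProduct.lid k V₂).toLinearMap.comp (LinearMap.rTensor V₂ f₁)))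

/-- Key computation: the functional `(g₁, g₂)` evaluated on the Koszul fiber map equals
minus `dualDistrib (f₁ ⊗ g₂ - g₁ ⊗ f₂)`. -/
lemma koszul_key (f₁ g₁ : Module.Dual k V₁) (f₂ g₂ : Module.Dual k V₂) (v : V₁ ⊗[k] V₂) :
    g₁ ((koszulFiber k V₁ V₂ f₁ f₂) v).1 + g₂ ((koszulFiber k V₁ V₂ f₁ f₂) v).2
      = - TensorProduct.dualDistrib k V₁ V₂ (f₁ ⊗ₜ[k] g₂ - g₁ ⊗ₜ[k] f₂) v := by
  induction v using TensorProduct.induction_on with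
  | zero => simp
  | tmul x y =>
      simp only [koszulFiber, LinearMap.prod_apply, Function.prod, LinearMap.coe_comp,
        LinearEquiv.coe_coe, Function.comp_apply, LinearMap.lTensor_tmul,
        LinearMap.rTensor_tmul, TensorProduct.rid_tmul, TensorProduct.lid_tmul,
        LinearMap.neg_apply, map_sub, map_smul, map_neg, smul_eq_mul,
        LinearMap.sub_apply, TensorProduct.dualDistrib_apply]
      ring
  | add a b ha hb =>
      simp only [map_add, Prod.fst_add, Prod.snd_add] at ha hb ⊢
      rw [add_add_add_comm, ha, hb]
      ring

/-- If `f₁ ≠ 0`, `f₂ ≠ 0` and the fiber exactness holds for `(f₁, f₂)`, then any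
`(g₁, g₂)` with `f₁ ⊗ g₂ - g₁ ⊗ f₂` vanishing on `K` is proportional to `(f₁, f₂)`. -/
lemma koszul_main [FiniteDimensional k V₁] [FiniteDimensional k V₂]
    (K : Submodule k (V₁ ⊗[k] V₂))
    (hL : ∀ (f₁ : Module.Dual k V₁) (f₂ : Module.Dual k V₂), f₁ ≠ 0 → f₂ ≠ 0 →
      ∀ w : V₁ × V₂, f₁ w.1 + f₂ w.2 = 0 →
        w ∈ Submodule.map (koszulFiber k V₁ V₂ f₁ f₂) K)
    (f₁ : Module.Dual k V₁) (f₂ : Module.Dual k V₂) (hf₁ : f₁ ≠ 0) (hf₂ : f₂ ≠ 0)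
    (g₁ : Module.Dual k V₁) (g₂ : Module.Dual k V₂)
    (hv : ∀ x ∈ K, TensorProduct.dualDistrib k V₁ V₂ (f₁ ⊗ₜ[k] g₂ - g₁ ⊗ₜ[k] f₂) x = 0) :
    ∃ c : k, g₁ = c • f₁ ∧ g₂ = c • f₂ := by
  -- the functional (g₁,g₂) vanishes on the hyperplane ker (f₁ ⊕ f₂)
  have hker : ∀ w : V₁ × V₂, f₁ w.1 + f₂ w.2 = 0 → g₁ w.1 + g₂ w.2 = 0 := by
    intro w hw
    obtain ⟨v, hvK, hve⟩ := hL f₁ f₂ hf₁ hf₂ w hw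
    have := koszul_key k V₁ V₂ f₁ g₁ f₂ g₂ v
    rw [hve, hv v hvK] at this
    simpa using this
  obtain ⟨u, hu⟩ : ∃ u : V₁, f₁ u = 1 := by
    obtain ⟨u₀, hu₀⟩ : ∃ u₀, f₁ u₀ ≠ 0 := by
      by_contra h; push_neg at h; exact hf₁ (LinearMap.ext fun x => h x)
    exact ⟨(f₁ u₀)⁻¹ • u₀, by simp [inv_mul_cancel₀ hu₀]⟩
  refine ⟨g₁ u, ?_, ?_⟩
  · ext x
    have h := hker (x - f₁ x • u, 0) (by simp [hu])
    simp only [map_sub, map_smul, smul_eq_mul, hu, mul_one, map_zero, add_zero] at h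
    simp only [LinearMap.smul_apply, smul_eq_mul]
    linear_combination h
  · ext y
    have h := hker (- f₂ y • u, y) (by simp [hu])
    simp only [map_neg, map_smul, smul_eq_mul, hu, mul_one] at h
    simp only [LinearMap.smul_apply, smul_eq_mul]
    linear_combination h

/-!
STATEMENT 14: for `K ⊆ V₁ ⊗ V₂ ⊆ ⋀²V` (`dim Vᵢ ≥ 2`), the Koszul sheaf `W(V,K)` on
`ℙ(V₁) × ℙ(V₂)` — the middle homology of
`K ⊗ O_P → V₁ ⊗ O_P(0,1) ⊕ V₂ ⊗ O_P(1,0) → O_P(1,1)` — vanishes if and only if the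
orthogonal complement `K^⊥ ⊆ V₁^∨ ⊗ V₂^∨` contains no nonzero tensor of rank at most two.

Since the middle map `β` is surjective with locally free kernel, vanishing of the sheaf is
equivalent to exactness of the fiber complex `K → V₁ ⊕ V₂ → k` at every `k`-point
`([f₁],[f₂])` of `ℙ(V₁) × ℙ(V₂)`, which is how it is formalized here.  A tensor of rank at
most two is one of the form `f₁ ⊗ g₂ - g₁ ⊗ f₂`.
-/
theorem stmt14 [FiniteDimensional k V₁] [FiniteDimensional k V₂]
    (h₁ : 2 ≤ Module.finrank k V₁) (h₂ : 2 ≤ Module.finrank k V₂)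
    (K : Submodule k (V₁ ⊗[k] V₂)) :
    (∀ (f₁ : Module.Dual k V₁) (f₂ : Module.Dual k V₂), f₁ ≠ 0 → f₂ ≠ 0 →
      ∀ w : V₁ × V₂, f₁ w.1 + f₂ w.2 = 0 →
        w ∈ Submodule.map (koszulFiber k V₁ V₂ f₁ f₂) K) ↔
    (∀ (f₁ g₁ : Module.Dual k V₁) (f₂ g₂ : Module.Dual k V₂),
      (∀ x ∈ K, TensorProduct.dualDistrib k V₁ V₂ (f₁ ⊗ₜ[k] g₂ - g₁ ⊗ₜ[k] f₂) x = 0) →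
      f₁ ⊗ₜ[k] g₂ - g₁ ⊗ₜ[k] f₂ = (0 : Module.Dual k V₁ ⊗[k] Module.Dual k V₂)) := by
  constructor
  · -- exactness ⇒ no nonzero rank ≤ 2 tensor in K^⊥
    intro hL f₁ g₁ f₂ g₂ hv
    by_cases hf₁ : f₁ = 0
    · by_cases hg₁ : g₁ = 0
      · simp [hf₁, hg₁]
      · by_cases hf₂ : f₂ = 0
        · simp [hf₁, hf₂]
        · -- tensor is -g₁ ⊗ f₂; use main with pair (g₁, f₂)
          have hv' : ∀ x ∈ K,
              TensorProduct.dualDistrib k V₁ V₂ (g₁ ⊗ₜ[k] f₂ - (0 : Module.Dual k V₁) ⊗ₜ[k] f₂) x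
                = 0 := by
            intro x hx
            have h := hv x hx
            rw [hf₁] at h
            simp only [map_sub, LinearMap.sub_apply, TensorProduct.zero_tmul, map_zero,
              LinearMap.zero_apply, zero_sub, sub_zero, LinearMap.neg_apply, neg_eq_zero] at h ⊢
            exact h
          obtain ⟨c, hc₁, hc₂⟩ := koszul_main k V₁ V₂ K hL g₁ f₂ hg₁ hf₂ 0 f₂ hv'
          obtain ⟨y₀, hy₀⟩ : ∃ y₀, f₂ y₀ ≠ 0 := by
            by_contra h; push_neg at h; exact hf₂ (LinearMap.ext fun x => h x)
          have hc1 : c = 1 := by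
            have h := congrArg (fun f => f y₀) hc₂
            simp only [LinearMap.smul_apply, smul_eq_mul] at h
            have h1 : (1 : k) * f₂ y₀ = c * f₂ y₀ := by rw [one_mul]; exact h
            exact (mul_right_cancel₀ hy₀ h1).symm
          rw [hc1, one_smul] at hc₁
          exact absurd hc₁.symm hg₁
    · by_cases hf₂ : f₂ = 0
      · by_cases hg₂ : g₂ = 0
        · simp [hf₂, hg₂]
        · -- tensor is f₁ ⊗ g₂; use main with pair (f₁, g₂)
          have hv' : ∀ x ∈ K,
              TensorProduct.dualDistrib k V₁ V₂
                (f₁ ⊗ₜ[k] (0 : Module.Dual k V₂) - f₁ ⊗ₜ[k] g₂) x = 0 := by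
            intro x hx
            have h := hv x hx
            rw [hf₂] at h
            simp only [map_sub, LinearMap.sub_apply, TensorProduct.tmul_zero, map_zero,
              LinearMap.zero_apply, zero_sub, sub_zero, LinearMap.neg_apply, neg_eq_zero] at h ⊢
            exact h
          obtain ⟨c, hc₁, hc₂⟩ := koszul_main k V₁ V₂ K hL f₁ g₂ hf₁ hg₂ f₁ 0 hv'
          obtain ⟨x₀, hx₀⟩ : ∃ x₀, f₁ x₀ ≠ 0 := by
            by_contra h; push_neg at h; exact hf₁ (LinearMap.ext fun x => h x)
          have hc1 : c = 1 := by
            have h := congrArg (fun f => f x₀) hc₁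
            simp only [LinearMap.smul_apply, smul_eq_mul] at h
            have h1 : (1 : k) * f₁ x₀ = c * f₁ x₀ := by rw [one_mul]; exact h
            exact (mul_right_cancel₀ hx₀ h1).symm
          rw [hc1, one_smul] at hc₂
          exact absurd hc₂.symm hg₂
      · obtain ⟨c, hc₁, hc₂⟩ := koszul_main k V₁ V₂ K hL f₁ f₂ hf₁ hf₂ g₁ g₂ hv
        rw [hc₁, hc₂, TensorProduct.tmul_smul, TensorProduct.smul_tmul', sub_self]
  · -- no nonzero rank ≤ 2 tensor in K^⊥ ⇒ exactness
    intro hR f₁ f₂ hf₁ hf₂ w hw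
    by_contra hwM
    obtain ⟨ψ, hψw, hψM⟩ :=
      (Submodule.map (koszulFiber k V₁ V₂ f₁ f₂) K).exists_dual_map_eq_bot_of_notMem hwM
        inferInstance
    set g₁ : Module.Dual k V₁ := ψ.comp (LinearMap.inl k V₁ V₂) with hg₁def
    set g₂ : Module.Dual k V₂ := ψ.comp (LinearMap.inr k V₁ V₂) with hg₂def
    have hψ : ∀ w' : V₁ × V₂, ψ w' = g₁ w'.1 + g₂ w'.2 := by
      intro w'
      have : w' = (w'.1, 0) + (0, w'.2) := by simp
      rw [this, map_add]
      simp [hg₁def, hg₂def]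
    have hψ0 : ∀ v ∈ K, ψ (koszulFiber k V₁ V₂ f₁ f₂ v) = 0 := by
      intro v hv
      have : ψ (koszulFiber k V₁ V₂ f₁ f₂ v) ∈
          Submodule.map ψ (Submodule.map (koszulFiber k V₁ V₂ f₁ f₂) K) :=
        Submodule.mem_map_of_mem (Submodule.mem_map_of_mem hv)
      rw [hψM] at this
      simpa using this
    have hv : ∀ x ∈ K,
        TensorProduct.dualDistrib k V₁ V₂ (g₁ ⊗ₜ[k] f₂ - f₁ ⊗ₜ[k] g₂) x = 0 := by
      intro x hx
      have h1 := koszul_key k V₁ V₂ f₁ g₁ f₂ g₂ x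
      rw [← hψ, hψ0 x hx] at h1
      have h2 : TensorProduct.dualDistrib k V₁ V₂ (f₁ ⊗ₜ[k] g₂ - g₁ ⊗ₜ[k] f₂) x = 0 :=
        neg_eq_zero.mp h1.symm
      simp only [map_sub, LinearMap.sub_apply] at h2 ⊢
      linear_combination -h2
    have heq : g₁ ⊗ₜ[k] f₂ - f₁ ⊗ₜ[k] g₂ = (0 : Module.Dual k V₁ ⊗[k] Module.Dual k V₂) :=
      hR g₁ f₁ g₂ f₂ hv
    have heq' : g₁ ⊗ₜ[k] f₂ = f₁ ⊗ₜ[k] g₂ := sub_eq_zero.mp heq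
    have hpt : ∀ (x : V₁) (y : V₂), g₁ x * f₂ y = f₁ x * g₂ y := by
      intro x y
      have := congrArg (fun T => TensorProduct.dualDistrib k V₁ V₂ T (x ⊗ₜ[k] y)) heq'
      simpa [TensorProduct.dualDistrib_apply] using this
    obtain ⟨u, hu⟩ : ∃ u : V₁, f₁ u = 1 := by
      obtain ⟨u₀, hu₀⟩ : ∃ u₀, f₁ u₀ ≠ 0 := by
        by_contra h; push_neg at h; exact hf₁ (LinearMap.ext fun x => h x)
      exact ⟨(f₁ u₀)⁻¹ • u₀, by simp [inv_mul_cancel₀ hu₀]⟩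
    obtain ⟨y, hy⟩ : ∃ y : V₂, f₂ y = 1 := by
      obtain ⟨y₀, hy₀⟩ : ∃ y₀, f₂ y₀ ≠ 0 := by
        by_contra h; push_neg at h; exact hf₂ (LinearMap.ext fun x => h x)
      exact ⟨(f₂ y₀)⁻¹ • y₀, by simp [inv_mul_cancel₀ hy₀]⟩
    have hg1 : ∀ x, g₁ x = f₁ x * g₂ y := fun x => by
      have := hpt x y; rwa [hy, mul_one] at this
    have hg2 : ∀ y', g₂ y' = g₂ y * f₂ y' := fun y' => by
      have := hpt u y'
      rw [hu, one_mul, hg1 u, hu, one_mul] at this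
      exact this.symm
    have : ψ w = 0 := by
      rw [hψ w]
      linear_combination hg1 w.1 + hg2 w.2 + g₂ y * hw
    exact hψw this
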